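/- Let γ ∈ (0,1), ε ∈ (0, 2(1-γ)/(4+5γ-6γ²)), and X ∈ [0, (1-γ)/3]. Define α = 1-ε and β = 1-ε², and consider the cubic f(x) = (x-α)[(x-(α+(1-α)γ))(x-β) - X(1-α)(1-β)] - γ X (1-α)(1-β)(x+1-2β). Then f(1 - ε²/2) > 0. -/

import Mathlib

/-- Key spectral-radius estimate: positivity of the characteristic polynomial
at `1 - ε²/2`. -/
theorem charpoly_positive_at_rho (γ ε X : ℝ) (hγ : 0 < γ) (hγ1 : γ < 1)
    (hε : 0 < ε) (hε0 : ε < 2 * (1 - γ) / (4 + 5 * γ - 6 * γ ^ 2))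
    (hX0 : 0 ≤ X) (hX : X ≤ (1 - γ) / 3) :
    let α : ℝ := 1 - ε
    let β : ℝ := 1 - ε ^ 2
    let f : ℝ → ℝ := fun x =>
      (x - α) * ((x - (α + (1 - α) * γ)) * (x - β) - X * (1 - α) * (1 - β))
        - γ * X * (1 - α) * (1 - β) * (x + 1 - 2 * β)
    0 < f (1 - ε ^ 2 / 2) := by
  intro α β f
  have hden : 0 < 4 + 5 * γ - 6 * γ ^ 2 := by nlinarith
  have hε' : ε * (4 + 5 * γ - 6 * γ ^ 2) < 2 * (1 - γ) := by
    rw [div_eq_mul_inv] at hε0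
    calc ε * (4 + 5 * γ - 6 * γ ^ 2)
        < (2 * (1 - γ) * (4 + 5 * γ - 6 * γ ^ 2)⁻¹) * (4 + 5 * γ - 6 * γ ^ 2) := by
          exact mul_lt_mul_of_pos_right hε0 hden
      _ = 2 * (1 - γ) := by rw [mul_assoc, inv_mul_cancel₀ hden.ne', mul_one]
  have hε1 : ε < 1 := by nlinarith
  have hg : 0 < ((1 - γ) / 2 - X) - ε * ((2 - γ) / 4 + ((3 * γ - 1) / 2) * X)
      + ε ^ 2 / 8 := by
    have h1 : 0 ≤ ((1 - γ) / 3 - X) * (2 + ε * (3 * γ - 1)) := by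
      apply mul_nonneg (by linarith) (by nlinarith)
    nlinarith [sq_nonneg ε]
  have hf : f (1 - ε ^ 2 / 2) = ε ^ 4 *
      (((1 - γ) / 2 - X) - ε * ((2 - γ) / 4 + ((3 * γ - 1) / 2) * X) + ε ^ 2 / 8) := by
    simp only [f, α, β]; ring
  rw [hf]
  positivity
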